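/- Let n ≥ 1 and m ≥ 3 be integers, and let μ = (μ_1,…,μ_n) ∈ ℂ^n be nonzero and NOT of the form c(e_a − e_b) for any scalar c ∈ ℂ and any pair of indices a ≠ b (where e_1,…,e_n are the standard basis vectors of ℂ^n). Then the polynomial ∑_{i=1}^{m} w_i · (h_i(λ_1,…,λ_n) − h_i(λ_1−μ_1,…,λ_n−μ_n)) is irreducible in the polynomial ring ℂ[w_1,…,w_m,λ_1,…,λ_n]. -/

import Mathlib

open MvPolynomial Finset


def Hsum {R : Type*} [CommSemiring R] (n p : ℕ) (x : Fin n → R) : R :=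
  ∑ d ∈ Finset.Nat.antidiagonalTuple n p, ∏ i, x i ^ d i

lemma map_Hsum {R S F : Type*} [CommSemiring R] [CommSemiring S] [FunLike F R S]
    [RingHomClass F R S] (φ : F) (n p : ℕ) (x : Fin n → R) :
    φ (Hsum n p x) = Hsum n p (fun i => φ (x i)) := by
  simp [Hsum, map_sum, map_prod, map_pow]

lemma sum_adT {M : Type*} [AddCommMonoid M] (k p : ℕ) (f : (Fin (k+1) → ℕ) → M) :
    ∑ d ∈ Finset.Nat.antidiagonalTuple (k+1) p, f d
      = ∑ ij ∈ Finset.HasAntidiagonal.antidiagonal p,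
          ∑ e ∈ Finset.Nat.antidiagonalTuple k ij.2, f (Fin.cons ij.1 e) := by
  rw [Finset.sum_sigma']
  refine (Finset.sum_bij' (fun (a : (_ : ℕ × ℕ) × (Fin k → ℕ)) _ => Fin.cons a.1.1 a.2)
    (fun d _ => ⟨(d 0, ∑ i, Fin.tail d i), Fin.tail d⟩) ?_ ?_ ?_ ?_ ?_).symm
  · intro a ha
    simp only [Finset.mem_sigma, Finset.HasAntidiagonal.mem_antidiagonal,
      Finset.Nat.mem_antidiagonalTuple] at ha ⊢
    rw [Fin.sum_cons, ha.2]
    exact ha.1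
  · intro d hd
    simp only [Finset.Nat.mem_antidiagonalTuple] at hd
    simp only [Finset.mem_sigma, Finset.HasAntidiagonal.mem_antidiagonal,
      Finset.Nat.mem_antidiagonalTuple]
    refine ⟨?_, trivial⟩
    rw [← hd, Fin.sum_univ_succ]; rfl
  · intro a ha
    simp only [Finset.mem_sigma, Finset.Nat.mem_antidiagonalTuple] at ha
    refine Sigma.ext ?_ ?_
    · simp [Fin.tail_cons, ha.2]
    · simp [Fin.tail_cons]
  · intro d hd; simp [Fin.cons_self_tail]
  · intro a ha; rfl

lemma Hsum_succ {R : Type*} [CommSemiring R] (k p : ℕ) (x : Fin (k+1) → R) :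
    Hsum (k+1) p x = ∑ j ∈ Finset.range (p+1),
      x 0 ^ j * Hsum k (p - j) (fun i => x i.succ) := by
  rw [Hsum, sum_adT, Finset.Nat.sum_antidiagonal_eq_sum_range_succ_mk]
  refine Finset.sum_congr rfl fun j hj => ?_
  rw [Hsum, Finset.mul_sum]
  refine Finset.sum_congr rfl fun e he => ?_
  rw [Fin.prod_univ_succ]
  simp [Fin.cons_zero, Fin.cons_succ]

lemma Hsum_zero {R : Type*} [CommSemiring R] (n : ℕ) (x : Fin n → R) :
    Hsum n 0 x = 1 := by
  simp [Hsum, Finset.Nat.antidiagonalTuple_zero_right]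

lemma Hsum_one {R : Type*} [CommSemiring R] (n : ℕ) (x : Fin n → R) :
    Hsum n 1 x = ∑ i, x i := by
  induction n with
  | zero => simp [Hsum]
  | succ k ih =>
    rw [Hsum_succ]
    rw [Finset.sum_range_succ, Finset.sum_range_succ, Finset.sum_range_zero]
    norm_num
    rw [ih, Hsum_zero, Fin.sum_univ_succ]
    ring

lemma Hsum_two {R : Type*} [CommRing R] (n : ℕ) (x : Fin n → R) :
    2 * Hsum n 2 x = (∑ i, x i)^2 + ∑ i, x i ^ 2 := by
  induction n with
  | zero => simp [Hsum]
  | succ k ih =>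
    rw [Hsum_succ]
    rw [Finset.sum_range_succ, Finset.sum_range_succ, Finset.sum_range_succ,
      Finset.sum_range_zero]
    norm_num
    rw [Hsum_zero, Hsum_one]
    rw [Fin.sum_univ_succ (f := x), Fin.sum_univ_succ (f := fun i => x i ^ 2)]
    linear_combination ih (fun i => x i.succ)

lemma Hsum_three {R : Type*} [CommRing R] (n : ℕ) (x : Fin n → R) :
    6 * Hsum n 3 x = (∑ i, x i)^3 + 3 * (∑ i, x i) * (∑ i, x i ^ 2)
      + 2 * ∑ i, x i ^ 3 := by
  induction n with
  | zero => simp [Hsum]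
  | succ k ih =>
    rw [Hsum_succ]
    rw [Finset.sum_range_succ, Finset.sum_range_succ, Finset.sum_range_succ,
      Finset.sum_range_succ, Finset.sum_range_zero]
    norm_num
    rw [Hsum_zero, Hsum_one]
    rw [Fin.sum_univ_succ (f := x), Fin.sum_univ_succ (f := fun i => x i ^ 2),
      Fin.sum_univ_succ (f := fun i => x i ^ 3)]
    linear_combination ih (fun i => x i.succ) + 3 * x 0 * Hsum_two k (fun i => x i.succ)


lemma hc_td_ne_zero {σ R : Type*} [CommSemiring R] {p : MvPolynomial σ R} (hp : p ≠ 0) :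
    homogeneousComponent p.totalDegree p ≠ 0 := by
  obtain ⟨d, hd, hsup⟩ := Finset.exists_mem_eq_sup p.support
    (support_nonempty.2 hp) (fun s => s.sum fun _ e => e)
  intro h
  have hcoeff := coeff_homogeneousComponent (σ := σ) p.totalDegree p d
  rw [h] at hcoeff
  have hdeg : d.degree = p.totalDegree := by
    rw [totalDegree, hsup, Finsupp.degree]; rfl
  rw [if_pos hdeg] at hcoeff
  exact (mem_support_iff.1 hd) hcoeff.symm

lemma totalDegree_mul_eq {σ R : Type*} [CommRing R] [IsDomain R]
    {p q : MvPolynomial σ R} (hp : p ≠ 0) (hq : q ≠ 0) :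
    (p * q).totalDegree = p.totalDegree + q.totalDegree := by
  classical
  refine le_antisymm (totalDegree_mul p q) ?_
  set a := homogeneousComponent p.totalDegree p with ha
  set b := homogeneousComponent q.totalDegree q with hb
  have hab : a * b ≠ 0 := mul_ne_zero (hc_td_ne_zero hp) (hc_td_ne_zero hq)
  have habh : (a * b).IsHomogeneous (p.totalDegree + q.totalDegree) :=
    (homogeneousComponent_isHomogeneous _ p).mul (homogeneousComponent_isHomogeneous _ q)
  obtain ⟨d, hd⟩ := (support_nonempty.2 hab).exists_mem
  have hddeg : d.degree = p.totalDegree + q.totalDegree := by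
    rw [Finsupp.degree_eq_weight_one]
    exact habh (mem_support_iff.1 hd)
  -- coeff d (p*q) = coeff d (a*b)
  have hco : coeff d (p * q) = coeff d (a * b) := by
    rw [coeff_mul, coeff_mul]
    refine Finset.sum_congr rfl fun uv huv => ?_
    rw [Finset.HasAntidiagonal.mem_antidiagonal] at huv
    have hsum : uv.1.degree + uv.2.degree = p.totalDegree + q.totalDegree := by
      rw [← hddeg, ← huv, Finsupp.degree_eq_weight_one, map_add]
    by_cases h1 : uv.1.degree = p.totalDegree
    · have h2 : uv.2.degree = q.totalDegree := by omega
      rw [ha, hb, coeff_homogeneousComponent, coeff_homogeneousComponent,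
        if_pos h1, if_pos h2]
    · rcases Nat.lt_or_ge uv.1.degree p.totalDegree with hlt | hge
      · have h2 : q.totalDegree < uv.2.degree := by omega
        have e1 : coeff uv.2 q = 0 := by
          apply coeff_eq_zero_of_totalDegree_lt
          exact h2
        have e2 : coeff uv.2 b = 0 := by
          rw [hb, coeff_homogeneousComponent, if_neg (by omega)]
        rw [e1, e2, mul_zero, mul_zero]
      · have h1' : p.totalDegree < uv.1.degree := by omega
        have hz : coeff uv.1 p = 0 := by
          apply coeff_eq_zero_of_totalDegree_lt
          exact h1'
        have hz' : coeff uv.1 a = 0 := by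
          rw [ha, coeff_homogeneousComponent, if_neg h1]
        rw [hz, hz', zero_mul, zero_mul]
  have : d ∈ (p * q).support := by
    rw [mem_support_iff, hco]
    exact mem_support_iff.1 hd
  calc p.totalDegree + q.totalDegree = d.degree := hddeg.symm
    _ ≤ (p * q).totalDegree := by
        exact le_totalDegree this

lemma eq_C_of_totalDegree_eq_zero {σ R : Type*} [CommSemiring R]
    {p : MvPolynomial σ R} (h : p.totalDegree = 0) : p = C (coeff 0 p) := by
  classical
  ext d
  rcases eq_or_ne d 0 with rfl | hd
  · simp
  · rw [coeff_C, if_neg (Ne.symm hd)]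
    by_contra hc
    have hdm : d ∈ p.support := mem_support_iff.2 hc
    have := (totalDegree_eq_zero_iff σ p).1 h d hdm
    exact hd (Finsupp.ext fun x => this x)

lemma key_irred {S : Type*} [CommRing S] [IsDomain S] {m : ℕ} (g : Fin m → S)
    (hne : ∃ i, g i ≠ 0) (hcop : ∀ b : S, (∀ i, b ∣ g i) → IsUnit b) :
    Irreducible (∑ i, (C (g i) * X i : MvPolynomial (Fin m) S)) := by
  classical
  set Q : MvPolynomial (Fin m) S := ∑ i, C (g i) * X i with hQ
  have hcoeffQ : ∀ i, coeff (Finsupp.single i 1) Q = g i := by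
    intro i
    rw [hQ, coeff_sum]
    rw [Finset.sum_eq_single i]
    · rw [coeff_C_mul, coeff_X_same, mul_one]
    · intro k _ hk
      rw [coeff_C_mul, coeff_X', if_neg, mul_zero]
      intro h
      exact hk (by
        have := Finsupp.single_left_injective (α := Fin m) one_ne_zero h
        exact this)
    · intro h; exact absurd (Finset.mem_univ i) h
  obtain ⟨i0, hi0⟩ := hne
  have hQne : Q ≠ 0 := fun h => hi0 (by rw [← hcoeffQ i0, h, coeff_zero])
  have hccQ : constantCoeff Q = 0 := by
    rw [hQ, map_sum]
    refine Finset.sum_eq_zero fun i _ => ?_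
    rw [map_mul, constantCoeff_X, mul_zero]
  have htdQ : Q.totalDegree ≤ 1 := by
    rw [hQ]
    refine (totalDegree_finset_sum _ _).trans ?_
    refine Finset.sup_le fun i _ => ?_
    refine (totalDegree_mul _ _).trans ?_
    simp [totalDegree_C, totalDegree_X]
  constructor
  · intro hu
    have := hu.map (constantCoeff (σ := Fin m) (R := S))
    rw [hccQ] at this
    exact not_isUnit_zero this
  · intro A B hAB
    have hA : A ≠ 0 := fun h => hQne (by rw [hAB, h, zero_mul])
    have hB : B ≠ 0 := fun h => hQne (by rw [hAB, h, mul_zero])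
    have htd : A.totalDegree + B.totalDegree ≤ 1 := by
      rw [← totalDegree_mul_eq hA hB, ← hAB]; exact htdQ
    have hdvd : ∀ b : S, ∀ W : MvPolynomial (Fin m) S, Q = C b * W → IsUnit b := by
      intro b W hW
      refine hcop b fun i => ⟨coeff (Finsupp.single i 1) W, ?_⟩
      rw [← hcoeffQ i, hW, coeff_C_mul]
    rcases Nat.eq_zero_or_pos A.totalDegree with h0 | hpos
    · left
      have hA' : A = C (coeff 0 A) := eq_C_of_totalDegree_eq_zero h0
      have := hdvd (coeff 0 A) B (by rw [hAB, ← hA'])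
      rw [hA']
      exact this.map C
    · right
      have h0B : B.totalDegree = 0 := by omega
      have hB' : B = C (coeff 0 B) := eq_C_of_totalDegree_eq_zero h0B
      have := hdvd (coeff 0 B) A (by rw [hAB, ← hB', mul_comm])
      rw [hB']
      exact this.map C

lemma two_sum {n : ℕ} {a b : Fin n} (hab : a ≠ b) (F : Fin n → ℂ)
    (hF : ∀ k, k ≠ a → k ≠ b → F k = 0) : ∑ k, F k = F a + F b := by
  classical
  rw [← Finset.sum_pair hab]
  refine (Finset.sum_subset (Finset.subset_univ _) ?_).symm
  intro x _ hx
  simp only [Finset.mem_insert, Finset.mem_singleton, not_or] at hx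
  exact hF x hx.1 hx.2

lemma endgame {n : ℕ} (μ : Fin n → ℂ) (a : Fin n) (ha : μ a ≠ 0)
    (hμ' : ∀ (c : ℂ) (a b : Fin n), a ≠ b →
      μ ≠ c • (Pi.single a (1 : ℂ) - Pi.single b (1 : ℂ)))
    (hM1 : ∑ j, μ j = 0)
    (hvan : ∀ lam : Fin n → ℂ, (∑ j, μ j * lam j) = (∑ j, μ j ^ 2) / 2 →
      Hsum n 3 lam - Hsum n 3 (fun j => lam j - μ j) = 0) : False := by
  classical
  set M2 : ℂ := ∑ j, μ j ^ 2 with hM2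
  set M3 : ℂ := ∑ j, μ j ^ 3 with hM3
  have hvan' : ∀ lam : Fin n → ℂ, (∑ j, μ j * lam j) = M2 / 2 →
      6 * (∑ j, μ j * lam j ^ 2) - 6 * (∑ j, μ j ^ 2 * lam j) + 2 * M3 = 0 := by
    intro lam h
    have T1 := Hsum_three n lam
    have T2 := Hsum_three n (fun j => lam j - μ j)
    simp only [] at T2
    have E := hvan lam h
    have hA : ∑ j, (lam j - μ j) = ∑ j, lam j := by
      rw [Finset.sum_sub_distrib, hM1, sub_zero]
    have hB : ∑ j, (lam j - μ j) ^ 2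
        = ∑ j, lam j ^ 2 - 2 * (∑ j, μ j * lam j) + M2 := by
      have e : ∑ j, (lam j ^ 2 - 2 * (μ j * lam j) + μ j ^ 2)
          = ∑ j, (lam j - μ j) ^ 2 := Finset.sum_congr rfl fun i _ => by ring
      rw [← e, Finset.sum_add_distrib, Finset.sum_sub_distrib, Finset.mul_sum, hM2]
    have hC : ∑ j, (lam j - μ j) ^ 3
        = ∑ j, lam j ^ 3 - 3 * (∑ j, μ j * lam j ^ 2)
          + 3 * (∑ j, μ j ^ 2 * lam j) - M3 := by
      have e : ∑ j, (lam j ^ 3 - 3 * (μ j * lam j ^ 2) + 3 * (μ j ^ 2 * lam j) - μ j ^ 3)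
          = ∑ j, (lam j - μ j) ^ 3 := Finset.sum_congr rfl fun i _ => by ring
      rw [← e, Finset.sum_sub_distrib, Finset.sum_add_distrib, Finset.sum_sub_distrib,
        Finset.mul_sum, Finset.mul_sum, hM3]
    rw [hA, hB, hC] at T2
    linear_combination 6 * E + T2 - T1 - 6 * (∑ j, lam j) * h
  -- dichotomy for each j ≠ a
  have hdich : ∀ j, j ≠ a → μ j = 0 ∨ μ j = -μ a := by
    intro j hj
    set α : ℂ := M2 / (2 * μ a) with hα
    have hpt : ∀ t : ℂ, (∑ k, μ k * (fun k => if k = a then α - t * μ j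
        else if k = j then t * μ a else 0) k) = M2 / 2 := by
      intro t
      rw [two_sum (Ne.symm hj) _ ?side]
      · simp only [eq_self_iff_true, if_true, if_neg hj]
        rw [hα]
        have key : μ a * (M2 / (2 * μ a)) = M2 / 2 := by
          rw [mul_comm 2 (μ a), ← mul_div_assoc, mul_div_mul_left _ _ ha]
        linear_combination key
      case side =>
        intro k hk1 hk2
        simp only [if_neg hk1, if_neg hk2, mul_zero]
    have Eq : ∀ t : ℂ, 6 * (μ a * (α - t * μ j) ^ 2 + μ j * (t * μ a) ^ 2)
        - 6 * (μ a ^ 2 * (α - t * μ j) + μ j ^ 2 * (t * μ a)) + 2 * M3 = 0 := by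
      intro t
      have := hvan' _ (hpt t)
      rw [two_sum (Ne.symm hj) (fun k => μ k * (if k = a then α - t * μ j
          else if k = j then t * μ a else 0) ^ 2) ?s1,
        two_sum (Ne.symm hj) (fun k => μ k ^ 2 * (if k = a then α - t * μ j
          else if k = j then t * μ a else 0)) ?s2] at this
      · simpa only [eq_self_iff_true, if_true, if_neg hj] using this
      case s1 => intro k hk1 hk2; simp [if_neg hk1, if_neg hk2]
      case s2 => intro k hk1 hk2; simp [if_neg hk1, if_neg hk2]
    have h12 : 12 * μ a * (μ j * (μ a + μ j)) = 0 := by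
      linear_combination Eq 1 + Eq (-1) - 2 * Eq 0
    rcases mul_eq_zero.1 h12 with h' | h'
    · exact absurd (by
        rcases mul_eq_zero.1 h' with h'' | h''
        · exact absurd h'' (by norm_num)
        · exact h'') ha
    · rcases mul_eq_zero.1 h' with h'' | h''
      · left; exact h''
      · right; linear_combination h''
  set T : Finset (Fin n) := Finset.univ.filter (fun j => j ≠ a ∧ μ j ≠ 0) with hT
  have hTval : ∀ j ∈ T, μ j = -μ a := by
    intro j hjT
    rw [hT, Finset.mem_filter] at hjT
    rcases hdich j hjT.2.1 with h | h
    · exact absurd h hjT.2.2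
    · exact h
  have hsum1 : μ a + ∑ x ∈ Finset.univ.erase a, μ x = 0 := by
    rw [Finset.add_sum_erase _ μ (Finset.mem_univ a)]
    exact hM1
  have hsum2 : ∑ x ∈ Finset.univ.erase a, μ x = ∑ x ∈ T, μ x := by
    refine (Finset.sum_subset ?_ ?_).symm
    · intro x hx
      rw [hT, Finset.mem_filter] at hx
      exact Finset.mem_erase.2 ⟨hx.2.1, Finset.mem_univ x⟩
    · intro x hx hxT
      by_contra hne
      refine hxT ?_
      rw [hT, Finset.mem_filter]
      exact ⟨Finset.mem_univ x, (Finset.mem_erase.1 hx).1, hne⟩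
  have hsum3 : ∑ x ∈ T, μ x = (T.card : ℂ) * (-μ a) := by
    rw [Finset.sum_congr rfl hTval, Finset.sum_const, nsmul_eq_mul]
  have hcard : (T.card : ℂ) = 1 := by
    have : μ a * (1 - (T.card : ℂ)) = 0 := by
      rw [hsum2, hsum3] at hsum1
      linear_combination hsum1
    rcases mul_eq_zero.1 this with h | h
    · exact absurd h ha
    · linear_combination -h
  have hcard' : T.card = 1 := by exact_mod_cast hcard
  obtain ⟨b, hb⟩ := Finset.card_eq_one.1 hcard'
  have hbT : b ∈ T := by rw [hb]; exact Finset.mem_singleton_self b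
  rw [hT, Finset.mem_filter] at hbT
  obtain ⟨-, hba, hbne⟩ := hbT
  have hbval : μ b = -μ a := hTval b (by rw [hb]; exact Finset.mem_singleton_self b)
  refine hμ' (μ a) a b (Ne.symm hba) ?_
  funext k
  simp only [Pi.smul_apply, Pi.sub_apply, smul_eq_mul]
  rcases eq_or_ne k a with rfl | hka
  · rw [Pi.single_eq_same, Pi.single_eq_of_ne (Ne.symm hba)]
    ring
  · rcases eq_or_ne k b with rfl | hkb
    · rw [Pi.single_eq_same, Pi.single_eq_of_ne hka, hbval]
      ring
    · rw [Pi.single_eq_of_ne hka, Pi.single_eq_of_ne hkb]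
      have : μ k = 0 := by
        by_contra hne
        have : k ∈ T := by
          rw [hT, Finset.mem_filter]; exact ⟨Finset.mem_univ k, hka, hne⟩
        rw [hb, Finset.mem_singleton] at this
        exact hkb this
      rw [this]; ring

/-- The complete homogeneous symmetric polynomial of degree `p` in `n` variables. -/
noncomputable def hpoly (n p : ℕ) : MvPolynomial (Fin n) ℂ :=
  ∑ d ∈ Finset.Nat.antidiagonalTuple n p, ∏ i, X i ^ d i

lemma coeff_linear {S : Type*} [CommSemiring S] {m : ℕ} (g : Fin m → S) (i : Fin m) :
    coeff (Finsupp.single i 1) (∑ j, C (g j) * X j) = g i := by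
  classical
  rw [coeff_sum, Finset.sum_eq_single i]
  · rw [coeff_C_mul, coeff_X_same, mul_one]
  · intro k _ hk
    rw [coeff_C_mul, coeff_X', if_neg, mul_zero]
    intro h
    exact hk (Finsupp.single_left_injective (α := Fin m) one_ne_zero h)
  · intro h; exact absurd (Finset.mem_univ i) h

/-- For `n ≥ 1`, `m ≥ 3`, and `μ ∈ ℂ^n` nonzero and not of the form
`c (e_a - e_b)`, the polynomial `∑_{i=1}^m w_i (h_i(λ) - h_i(λ - μ))` is irreducible
in `ℂ[w_1, …, w_m, λ_1, …, λ_n]`. -/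
theorem stmt0 (n m : ℕ) (hn : 1 ≤ n) (hm : 3 ≤ m) (μ : Fin n → ℂ)
    (hμ : μ ≠ 0)
    (hμ' : ∀ (c : ℂ) (a b : Fin n), a ≠ b →
      μ ≠ c • (Pi.single a (1 : ℂ) - Pi.single b (1 : ℂ))) :
    Irreducible
      (∑ i : Fin m,
        (X (Sum.inl i) : MvPolynomial (Fin m ⊕ Fin n) ℂ) *
          (aeval (fun j : Fin n => (X (Sum.inr j) : MvPolynomial (Fin m ⊕ Fin n) ℂ))
              (hpoly n ((i : ℕ) + 1)) -
            aeval (fun j : Fin n =>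
                (X (Sum.inr j) : MvPolynomial (Fin m ⊕ Fin n) ℂ) - C (μ j))
              (hpoly n ((i : ℕ) + 1)))) := by
  classical
  set S := MvPolynomial (Fin n) ℂ
  set G : ℕ → S := fun p =>
    Hsum n p (X : Fin n → S) - Hsum n p (fun j => (X j : S) - C (μ j)) with hG
  set g : Fin m → S := fun i => G ((i : ℕ) + 1) with hgdef
  obtain ⟨a, ha⟩ : ∃ a, μ a ≠ 0 := Function.ne_iff.1 hμ
  set M1 : ℂ := ∑ j, μ j with hM1def
  set M2 : ℂ := ∑ j, μ j ^ 2 with hM2def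
  -- G 1
  have hG1 : G 1 = C M1 := by
    show Hsum n 1 (X : Fin n → S) - Hsum n 1 (fun j => (X j : S) - C (μ j)) = C M1
    rw [Hsum_one, Hsum_one, Finset.sum_sub_distrib, hM1def, map_sum]
    ring
  -- eval of G p
  have hevalG : ∀ (lam : Fin n → ℂ) (p : ℕ),
      eval lam (G p) = Hsum n p lam - Hsum n p (fun j => lam j - μ j) := by
    intro lam p
    show eval lam (Hsum n p (X : Fin n → S) - Hsum n p (fun j => (X j : S) - C (μ j))) = _
    rw [map_sub, map_Hsum (eval lam), map_Hsum (eval lam)]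
    congr 1
    · congr 1; funext i; simp
    · congr 1; funext i; simp
  -- case M1 = 0 : G 2 explicit
  have hG2 : M1 = 0 → G 2 = (∑ j, C (μ j) * X j) - C (M2 / 2) := by
    intro h0
    have h2 : (2 : S) * G 2 = 2 * ((∑ j, C (μ j) * X j) - C (M2 / 2)) := by
      have hA : (∑ j, ((X j : S) - C (μ j))) = ∑ j, (X j : S) := by
        rw [Finset.sum_sub_distrib, ← map_sum, ← hM1def, h0, map_zero, sub_zero]
      have hB : (∑ j, ((X j : S) - C (μ j)) ^ 2)
          = ∑ j, (X j : S) ^ 2 - 2 * (∑ j, C (μ j) * X j) + C M2 := by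
        have e : (∑ j, ((X j : S) ^ 2 - 2 * (C (μ j) * X j) + C (μ j ^ 2)))
            = ∑ j, ((X j : S) - C (μ j)) ^ 2 :=
          Finset.sum_congr rfl fun i _ => by rw [map_pow]; ring
        rw [← e, Finset.sum_add_distrib, Finset.sum_sub_distrib, Finset.mul_sum,
          ← map_sum, ← hM2def]
      have hmulG2 : (2:S) * G 2 = 2 * Hsum n 2 (X : Fin n → S)
          - 2 * Hsum n 2 (fun j => (X j : S) - C (μ j)) := by
        show (2:S) * (Hsum n 2 (X : Fin n → S) - Hsum n 2 (fun j => (X j : S) - C (μ j))) = _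
        ring
      rw [hmulG2, Hsum_two, Hsum_two, hA, hB]
      have hC2 : (C (M2 / 2) : S) * 2 = C M2 := by
        have : (2 : S) = C (2 : ℂ) := by exact_mod_cast (map_ofNat C 2).symm
        rw [this, ← map_mul]
        norm_num
      linear_combination hC2
    have h2ne : (2 : S) ≠ 0 := by
      intro h
      have := congrArg (constantCoeff (σ := Fin n) (R := ℂ)) h
      rw [map_ofNat] at this
      norm_num at this
    exact mul_left_cancel₀ h2ne h2
  -- coefficient of G 2 at X a
  have hcoeffG2 : M1 = 0 → coeff (Finsupp.single a 1) (G 2) = μ a := by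
    intro h0
    rw [hG2 h0, coeff_sub, coeff_linear, coeff_C,
      if_neg (Ne.symm (fun h => (one_ne_zero (Finsupp.single_eq_zero.1 h)))), sub_zero]
  have hG2ne : M1 = 0 → G 2 ≠ 0 := by
    intro h0 h
    have := hcoeffG2 h0
    rw [h, coeff_zero] at this
    exact ha this.symm
  -- total degree of G 2
  have htdG2 : M1 = 0 → (G 2).totalDegree = 1 := by
    intro h0
    refine le_antisymm ?_ ?_
    · rw [hG2 h0, sub_eq_add_neg]
      refine (totalDegree_add _ _).trans ?_
      refine max_le ?_ ?_
      · refine (totalDegree_finset_sum _ _).trans ?_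
        refine Finset.sup_le fun i _ => ?_
        refine (totalDegree_mul _ _).trans ?_
        simp [totalDegree_C, totalDegree_X]
      · rw [totalDegree_neg]; simp [totalDegree_C]
    · have hmem : Finsupp.single a 1 ∈ (G 2).support := by
        rw [mem_support_iff, hcoeffG2 h0]; exact ha
      have := le_totalDegree hmem
      simpa using this
  -- the coprimality condition
  have hcop : ∀ b : S, (∀ i, b ∣ g i) → IsUnit b := by
    intro b hb
    rcases eq_or_ne M1 0 with h0 | h0
    · -- use G 2 and G 3
      have hb2 : b ∣ G 2 := by
        have := hb ⟨1, by omega⟩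
        simpa [hgdef] using this
      have hb3 : b ∣ G 3 := by
        have := hb ⟨2, by omega⟩
        simpa [hgdef] using this
      obtain ⟨c, hc⟩ := hb2
      have hbne : b ≠ 0 := by
        intro h; exact hG2ne h0 (by rw [hc, h, zero_mul])
      have hcne : c ≠ 0 := by
        intro h; exact hG2ne h0 (by rw [hc, h, mul_zero])
      have htd : b.totalDegree + c.totalDegree = 1 := by
        rw [← totalDegree_mul_eq hbne hcne, ← hc, htdG2 h0]
      rcases Nat.eq_zero_or_pos b.totalDegree with htb | htb
      · have hb' : b = C (coeff 0 b) := eq_C_of_totalDegree_eq_zero htb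
        have : coeff 0 b ≠ 0 := by
          intro h; rw [h, map_zero] at hb'; exact hbne hb'
        rw [hb']
        exact (Ne.isUnit this).map C
      · exfalso
        have htc : c.totalDegree = 0 := by omega
        have hc' : c = C (coeff 0 c) := eq_C_of_totalDegree_eq_zero htc
        have hγne : coeff 0 c ≠ 0 := by
          intro h; rw [h, map_zero] at hc'; exact hcne hc'
        obtain ⟨d, hd⟩ := hb3
        refine endgame μ a ha hμ' (by rw [← hM1def]; exact h0) ?_
        intro lam hlam
        have e2 : eval lam (G 2) = 0 := by
          rw [hG2 h0, map_sub, map_sum]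
          simp only [map_mul, eval_C, eval_X]
          rw [hlam]
          rw [← hM2def]
          ring
        rw [hc, hc', map_mul, eval_C] at e2
        have hbz : eval lam b = 0 := by
          rcases mul_eq_zero.1 e2 with h | h
          · exact h
          · exact absurd h hγne
        have e3 : eval lam (G 3) = 0 := by
          rw [hd, map_mul, hbz, zero_mul]
        rw [hevalG lam 3] at e3
        exact e3
    · -- G 1 is a nonzero constant
      have hb1 : b ∣ C M1 := by
        have := hb ⟨0, by omega⟩
        simpa [hgdef, hG1] using this
      exact isUnit_of_dvd_unit hb1 ((Ne.isUnit h0).map C)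
  have hne : ∃ i, g i ≠ 0 := by
    rcases eq_or_ne M1 0 with h0 | h0
    · exact ⟨⟨1, by omega⟩, by simpa [hgdef] using hG2ne h0⟩
    · refine ⟨⟨0, by omega⟩, ?_⟩
      simp only [hgdef]
      show G (0 + 1) ≠ 0
      rw [hG1]
      intro h
      have := congrArg (eval (fun _ => (0:ℂ))) h
      simp at this
      exact h0 this
  have hQ := key_irred g hne hcop
  -- transport along sumAlgEquiv
  set e := sumAlgEquiv ℂ (Fin m) (Fin n) with he
  have haev : ∀ (R' : Type) (_ : CommRing R') (_ : Algebra ℂ R') (f : Fin n → R') (p : ℕ),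
      aeval f (hpoly n p) = Hsum n p f := by
    intro R' _ _ f p
    show aeval f (Hsum n p X) = _
    rw [map_Hsum (aeval f)]
    simp [aeval_X]
  have hEP : e (∑ i : Fin m,
        (X (Sum.inl i) : MvPolynomial (Fin m ⊕ Fin n) ℂ) *
          (aeval (fun j : Fin n => (X (Sum.inr j) : MvPolynomial (Fin m ⊕ Fin n) ℂ))
              (hpoly n ((i : ℕ) + 1)) -
            aeval (fun j : Fin n =>
                (X (Sum.inr j) : MvPolynomial (Fin m ⊕ Fin n) ℂ) - C (μ j))
              (hpoly n ((i : ℕ) + 1))))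
      = ∑ i, C (g i) * X i := by
    rw [map_sum]
    refine Finset.sum_congr rfl fun i _ => ?_
    rw [haev _ _ _ _ _, haev _ _ _ _ _, map_mul, map_sub,
      map_Hsum e, map_Hsum e]
    have hXl : e (X (Sum.inl i)) = X i := by
      rw [he, sumAlgEquiv_X_inl]
    have hXr : ∀ j, e (X (Sum.inr j) : MvPolynomial (Fin m ⊕ Fin n) ℂ) = C (X j) := by
      intro j
      rw [he, sumAlgEquiv_X_inr]
    have hCc : ∀ c : ℂ, e (C c : MvPolynomial (Fin m ⊕ Fin n) ℂ) = C (C c) := by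
      intro c
      rw [he, sumAlgEquiv_C_inl]
    rw [hXl]
    rw [mul_comm]
    congr 1
    have h1 : (fun j => e (X (Sum.inr j) : MvPolynomial (Fin m ⊕ Fin n) ℂ))
        = fun j => (C (X j) : MvPolynomial (Fin m) S) := funext hXr
    have h2 : (fun j => e ((X (Sum.inr j) : MvPolynomial (Fin m ⊕ Fin n) ℂ) - C (μ j)))
        = fun j => (C ((X j : S) - C (μ j)) : MvPolynomial (Fin m) S) := by
      funext j
      rw [map_sub, hXr, hCc, map_sub]
    rw [h1, h2]
    rw [← map_Hsum (C : S →+* MvPolynomial (Fin m) S),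
      ← map_Hsum (C : S →+* MvPolynomial (Fin m) S), ← map_sub]
  have : Irreducible (e (∑ i : Fin m,
        (X (Sum.inl i) : MvPolynomial (Fin m ⊕ Fin n) ℂ) *
          (aeval (fun j : Fin n => (X (Sum.inr j) : MvPolynomial (Fin m ⊕ Fin n) ℂ))
              (hpoly n ((i : ℕ) + 1)) -
            aeval (fun j : Fin n =>
                (X (Sum.inr j) : MvPolynomial (Fin m ⊕ Fin n) ℂ) - C (μ j))
              (hpoly n ((i : ℕ) + 1))))) := by
    rw [hEP]
    exact hQ
  exact (MulEquiv.irreducible_iff e).1 this
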